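/- Let S be a countably infinite set and let (P_n)_{n≥1} be a sequence of partitions of S such that: every part of every P_n is finite, P_{n+1} is coarser than P_n (every part of P_n is contained in a part of P_{n+1}), and for any two elements x, y ∈ S there exists n with x and y in the same part of P_n. Then there exists a linear order ≤ on S, order-isomorphic to (ℤ, ≤), such that every part of every partition P_n is an interval of this order. -/

import Mathlib

namespace Stmt13Aux

variable {S : Type*}

/-- reverse-lexicographic strict order on eventually-equal key sequences. -/
def klt (key : ℕ → S → ℤ) (x y : S) : Prop :=
  ∃ n, key n x < key n y ∧ ∀ k, n < k → key k x = key k y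

variable {key : ℕ → S → ℤ}

theorem klt_asymm {x y : S} (h1 : klt key x y) (h2 : klt key y x) : False := by
  obtain ⟨n, hn, hn'⟩ := h1
  obtain ⟨m, hm, hm'⟩ := h2
  rcases lt_trichotomy n m with h | h | h
  · exact hm.ne' (hn' m h)
  · subst h; exact lt_asymm hn hm
  · exact hn.ne ((hm' n h).symm)

theorem klt_irrefl {x : S} (h : klt key x x) : False := by
  obtain ⟨n, hn, -⟩ := h; exact lt_irrefl _ hn

theorem klt_ne {x y : S} (h : klt key x y) : x ≠ y := by
  rintro rfl; exact klt_irrefl h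

theorem klt_trans {x y z : S} (h1 : klt key x y) (h2 : klt key y z) : klt key x z := by
  obtain ⟨n, hn, hn'⟩ := h1
  obtain ⟨m, hm, hm'⟩ := h2
  rcases lt_trichotomy n m with h | h | h
  · exact ⟨m, by rw [hn' m h]; exact hm,
      fun k hk => (hn' k (h.trans hk)).trans (hm' k hk)⟩
  · subst h
    exact ⟨n, hn.trans hm, fun k hk => (hn' k hk).trans (hm' k hk)⟩
  · exact ⟨n, by rw [← hm' n h]; exact hn,
      fun k hk => (hn' k hk).trans (hm' k (h.trans hk))⟩

theorem key_eq_of_le (hmono : ∀ (n : ℕ) (x y : S), key n x = key n y → key (n+1) x = key (n+1) y)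
    {n m : ℕ} (h : n ≤ m) {x y : S} (hxy : key n x = key n y) : key m x = key m y := by
  induction m, h using Nat.le_induction with
  | base => exact hxy
  | succ m _ ih => exact hmono m x y ih

theorem klt_total (hmono : ∀ (n : ℕ) (x y : S), key n x = key n y → key (n+1) x = key (n+1) y)
    (hagree : ∀ x y : S, ∃ n, ∀ k, n ≤ k → key k x = key k y)
    (hzero : Function.Injective (key 0)) {x y : S} (hne : x ≠ y) :
    klt key x y ∨ klt key y x := by
  classical
  have hex : ∃ n, ∀ k, n ≤ k → key k x = key k y := hagree x y
  have hn : ∀ k, Nat.find hex ≤ k → key k x = key k y := Nat.find_spec hex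
  have hne0 : Nat.find hex ≠ 0 := by
    intro h
    exact hne (hzero (hn 0 (by omega)))
  obtain ⟨m, hm1⟩ : ∃ m, Nat.find hex = m + 1 := ⟨Nat.find hex - 1, by omega⟩
  have hm : key m x ≠ key m y := by
    intro he
    exact Nat.find_min hex (by omega) (fun k hk => key_eq_of_le hmono hk he)
  rcases hm.lt_or_gt with h | h
  · exact Or.inl ⟨m, h, fun k hk => hn k (by omega)⟩
  · exact Or.inr ⟨m, h, fun k hk => (hn k (by omega)).symm⟩

theorem key_interval (hmono : ∀ (n : ℕ) (x y : S), key n x = key n y → key (n+1) x = key (n+1) y)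
    {n : ℕ} {x y z : S} (hxy : key n x = key n y)
    (h1 : x = z ∨ klt key x z) (h2 : z = y ∨ klt key z y) : key n x = key n z := by
  rcases h1 with rfl | ⟨a, ha, ha'⟩
  · rfl
  rcases h2 with rfl | ⟨b, hb, hb'⟩
  · exact hxy
  by_contra hne
  have hna : n ≤ a := by
    by_contra h; exact hne (ha' n (by omega))
  have hnz : key n z ≠ key n y := fun h => hne (hxy.trans h.symm)
  have hnb : n ≤ b := by
    by_contra h; exact hnz (hb' n (by omega))
  rcases lt_trichotomy a b with h | h | h
  · have e1 : key b x = key b z := ha' b h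
    have e2 : key b x = key b y := key_eq_of_le hmono hnb hxy
    rw [← e1, ← e2] at hb
    exact lt_irrefl _ hb
  · subst h
    have e2 : key a x = key a y := key_eq_of_le hmono hna hxy
    rw [← e2] at hb
    exact lt_irrefl _ (ha.trans hb)
  · have e1 : key a z = key a y := hb' a h
    have e2 : key a x = key a y := key_eq_of_le hmono hna hxy
    rw [e1, ← e2] at ha
    exact lt_irrefl _ ha

theorem exists_equiv_int [Infinite S]
    (hmono : ∀ (n : ℕ) (x y : S), key n x = key n y → key (n+1) x = key (n+1) y)
    (hagree : ∀ x y : S, ∃ n, ∀ k, n ≤ k → key k x = key k y)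
    (hzero : Function.Injective (key 0))
    (hfink : ∀ (n : ℕ) (x : S), {y | key n x = key n y}.Finite)
    (hbelow : ∀ x : S, ∃ y, klt key y x)
    (habove : ∀ x : S, ∃ y, klt key x y) :
    ∃ f : S ≃ ℤ, ∀ x y : S, klt key x y ↔ f x < f y := by
  classical
  letI : LinearOrder S :=
    { le := fun x y => x = y ∨ klt key x y
      lt := klt key
      le_refl := fun x => Or.inl rfl
      le_trans := by
        rintro a b c (rfl | h1) h2
        · exact h2
        rcases h2 with rfl | h2
        · exact Or.inr h1
        · exact Or.inr (klt_trans h1 h2)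
      le_antisymm := by
        rintro a b (rfl | h1) h2
        · rfl
        rcases h2 with rfl | h2
        · rfl
        · exact absurd (klt_asymm h1 h2) (by simp)
      le_total := by
        intro a b
        by_cases h : a = b
        · exact Or.inl (Or.inl h)
        · rcases klt_total hmono hagree hzero h with h' | h'
          · exact Or.inl (Or.inr h')
          · exact Or.inr (Or.inr h')
      lt_iff_le_not_ge := by
        intro a b
        constructor
        · intro h
          refine ⟨Or.inr h, ?_⟩
          rintro (rfl | h')
          · exact klt_irrefl h
          · exact klt_asymm h h'
        · rintro ⟨(rfl | h1), h2⟩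
          · exact absurd (Or.inl rfl) h2
          · exact h1
      toDecidableLE := fun _ _ => Classical.dec _ }
  letI : LocallyFiniteOrder S := LocallyFiniteOrder.ofFiniteIcc (by
    intro a b
    obtain ⟨n, hn⟩ := hagree a b
    apply (hfink n a).subset
    intro z hz
    exact key_interval hmono (hn n le_rfl) hz.1 hz.2)
  haveI : NoMaxOrder S := ⟨fun x => habove x⟩
  haveI : NoMinOrder S := ⟨fun x => (hbelow x).imp fun y h => h⟩
  letI : SuccOrder S := LinearLocallyFiniteOrder.succOrder S
  letI : PredOrder S := LinearLocallyFiniteOrder.predOrder S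
  let g : S ≃o ℤ := orderIsoIntOfLinearSuccPredArch
  refine ⟨g.toEquiv, fun x y => ?_⟩
  constructor
  · intro h
    exact g.lt_iff_lt.mpr h
  · intro h
    exact g.lt_iff_lt.mp h

open Classical in
/-- count of growth stages below `n`. -/
noncomputable def tcount (g : ℕ → Prop) : ℕ → ℕ
  | 0 => 0
  | n + 1 => tcount g n + (if g n then 1 else 0)

theorem tcount_mono (g : ℕ → Prop) {a b : ℕ} (h : a ≤ b) : tcount g a ≤ tcount g b := by
  induction b, h using Nat.le_induction with
  | base => exact le_refl _
  | succ b _ ih => calc tcount g a ≤ tcount g b := ih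
                        _ ≤ tcount g (b+1) := by rw [tcount]; omega

theorem tcount_grow (g : ℕ → Prop) {n : ℕ} (h : g n) : tcount g (n+1) = tcount g n + 1 := by
  rw [tcount, if_pos h]

theorem tcount_unbounded (g : ℕ → Prop) (hg : ∀ n, ∃ k, n ≤ k ∧ g k) (m : ℕ) :
    ∃ k, m < tcount g k := by
  induction m with
  | zero =>
    obtain ⟨k, -, hk⟩ := hg 0
    exact ⟨k + 1, by rw [tcount_grow g hk]; omega⟩
  | succ m ih =>
    obtain ⟨k, hk⟩ := ih
    obtain ⟨k', hkk', hk'⟩ := hg k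
    refine ⟨k' + 1, ?_⟩
    have := tcount_mono g hkk'
    rw [tcount_grow g hk']
    omega

theorem tcount_hits (g : ℕ → Prop) (hg : ∀ n, ∃ k, n ≤ k ∧ g k) (m : ℕ) :
    ∃ k, g k ∧ tcount g k = m := by
  classical
  have hex : ∃ k, m < tcount g k := tcount_unbounded g hg m
  have hspec : m < tcount g (Nat.find hex) := Nat.find_spec hex
  have hne0 : Nat.find hex ≠ 0 := by
    intro h
    rw [h] at hspec
    simp [tcount] at hspec
  obtain ⟨j, hj⟩ : ∃ j, Nat.find hex = j + 1 := ⟨Nat.find hex - 1, by omega⟩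
  have hjle : tcount g j ≤ m := by
    have := Nat.find_min hex (m := j) (by omega)
    omega
  rw [hj] at hspec
  by_cases hgj : g j
  · refine ⟨j, hgj, ?_⟩
    rw [tcount_grow g hgj] at hspec
    omega
  · exfalso
    rw [tcount, if_neg hgj, Nat.add_zero] at hspec
    omega

theorem tcount_hits_ge (g : ℕ → Prop) (hg : ∀ n, ∃ k, n ≤ k ∧ g k) (n m : ℕ)
    (hm : tcount g n < m) : ∃ k, n ≤ k ∧ g k ∧ tcount g k = m := by
  obtain ⟨k, hk1, hk2⟩ := tcount_hits g hg m
  refine ⟨k, ?_, hk1, hk2⟩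
  by_contra h
  have := tcount_mono g (le_of_lt (not_le.mp h))
  omega

open Classical in
noncomputable def mkKey (emb : S → ℕ) (P : ℕ → S → S → Prop) (x₀ : S) (r : ℕ → S → ℕ)
    (t : ℕ → ℕ) : ℕ → S → ℤ
  | 0, x => (emb x : ℤ)
  | n + 1, x =>
    if P n x₀ x then 0
    else if Even (t n) then -(r n x : ℤ) - 1 else (r n x : ℤ) + 1

end Stmt13Aux

open Stmt13Aux in
theorem stmt13 {S : Type*} [Countable S] [Infinite S]
    (P : ℕ → S → S → Prop) (hequiv : ∀ n, Equivalence (P n))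
    (hfin : ∀ (n : ℕ) (x : S), {y | P n x y}.Finite)
    (hcoarser : ∀ (n : ℕ) (x y : S), P n x y → P (n + 1) x y)
    (hexh : ∀ x y : S, ∃ n, P n x y) :
    ∃ f : S ≃ ℤ, ∀ (n : ℕ) (x y z : S), P n x y → f x ≤ f z → f z ≤ f y → P n x z := by
  classical
  obtain ⟨emb, hemb⟩ : ∃ f : S → ℕ, Function.Injective f :=
    countable_iff_exists_injective S |>.mp ‹Countable S›
  have hrefl : ∀ n (x : S), P n x x := fun n x => (hequiv n).refl x
  have hsymm : ∀ n (x y : S), P n x y → P n y x := fun n _ _ h => (hequiv n).symm h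
  have htrans : ∀ n (x y z : S), P n x y → P n y z → P n x z :=
    fun n _ _ _ h h' => (hequiv n).trans h h'
  have hPle : ∀ {a b : ℕ}, a ≤ b → ∀ x y : S, P a x y → P b x y := by
    intro a b hab x y h
    induction b, hab using Nat.le_induction with
    | base => exact h
    | succ b _ ih => exact hcoarser b x y ih
  have hne : Nonempty S := inferInstance
  set x₀ : S := Classical.arbitrary S with hx₀
  -- representative key of a class: minimal emb-value in the class
  set r : ℕ → S → ℕ := fun n x => sInf (emb '' {y | P n x y}) with hr
  have hr_mem : ∀ n (x : S), ∃ y, P n x y ∧ emb y = r n x := by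
    intro n x
    have hne' : (emb '' {y | P n x y}).Nonempty := ⟨emb x, x, hrefl n x, rfl⟩
    obtain ⟨y, hy, hy'⟩ := Nat.sInf_mem hne'
    exact ⟨y, hy, hy'⟩
  have hr_eq : ∀ n (x y : S), P n x y → r n x = r n y := by
    intro n x y h
    have : {z | P n x z} = {z | P n y z} := by
      ext z
      exact ⟨fun hz => htrans n y x z (hsymm n x y h) hz, fun hz => htrans n x y z h hz⟩
    simp only [hr, this]
  have hr_inj : ∀ n (x y : S), r n x = r n y → P n x y := by
    intro n x y h
    obtain ⟨a, ha, ha'⟩ := hr_mem n x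
    obtain ⟨b, hb, hb'⟩ := hr_mem n y
    have : a = b := hemb (by rw [ha', hb', h])
    subst this
    exact htrans n x a y ha (hsymm n y a hb)
  set grow : ℕ → Prop := fun k => ∃ y, P (k+1) x₀ y ∧ ¬ P k x₀ y with hgrow
  set t : ℕ → ℕ := tcount grow with ht
  set key : ℕ → S → ℤ := mkKey emb P x₀ r t with hkey
  have hkey0 : ∀ x : S, key 0 x = (emb x : ℤ) := fun x => rfl
  have hkeyS : ∀ (n : ℕ) (x : S), key (n+1) x =
      if P n x₀ x then 0
      else if Even (t n) then -(r n x : ℤ) - 1 else (r n x : ℤ) + 1 := by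
    intro n x
    rw [hkey, mkKey]
  -- characterization of key equality
  have hkiff : ∀ (n : ℕ) (x y : S), key (n+1) x = key (n+1) y ↔ P n x y := by
    intro n x y
    rw [hkeyS, hkeyS]
    by_cases hx : P n x₀ x <;> by_cases hy : P n x₀ y
    · simp only [if_pos hx, if_pos hy]
      exact ⟨fun _ => htrans n x x₀ y (hsymm n x₀ x hx) hy, fun _ => trivial⟩
    · simp only [if_pos hx, if_neg hy]
      constructor
      · intro h
        exfalso
        by_cases he : Even (t n)
        · rw [if_pos he] at h; omega
        · rw [if_neg he] at h; omega
      · intro h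
        exact absurd (htrans n x₀ x y hx h) hy
    · simp only [if_neg hx, if_pos hy]
      constructor
      · intro h
        exfalso
        by_cases he : Even (t n)
        · rw [if_pos he] at h; omega
        · rw [if_neg he] at h; omega
      · intro h
        exact absurd (htrans n x₀ y x hy (hsymm n x y h)) hx
    · simp only [if_neg hx, if_neg hy]
      by_cases he : Even (t n)
      · rw [if_pos he, if_pos he]
        constructor
        · intro h
          exact hr_inj n x y (by omega)
        · intro h
          rw [hr_eq n x y h]
      · rw [if_neg he, if_neg he]
        constructor
        · intro h
          exact hr_inj n x y (by omega)
        · intro h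
          rw [hr_eq n x y h]
  have hmono : ∀ (n : ℕ) (x y : S), key n x = key n y → key (n+1) x = key (n+1) y := by
    intro n x y h
    cases n with
    | zero =>
      have : x = y := hemb (by rw [hkey0, hkey0] at h; exact_mod_cast h)
      rw [this]
    | succ m =>
      exact (hkiff (m+1) x y).mpr (hcoarser m x y ((hkiff m x y).mp h))
  have hagree : ∀ x y : S, ∃ n, ∀ k, n ≤ k → key k x = key k y := by
    intro x y
    obtain ⟨n, hn⟩ := hexh x y
    refine ⟨n + 1, fun k hk => ?_⟩
    obtain ⟨j, rfl⟩ : ∃ j, k = j + 1 := ⟨k - 1, by omega⟩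
    exact (hkiff j x y).mpr (hPle (by omega) x y hn)
  have hzero : Function.Injective (key 0) := by
    intro x y h
    rw [hkey0, hkey0] at h
    exact hemb (by exact_mod_cast h)
  have hfink : ∀ (n : ℕ) (x : S), {y | key n x = key n y}.Finite := by
    intro n x
    cases n with
    | zero =>
      apply Set.Finite.subset (Set.finite_singleton x)
      intro y hy
      simp only [Set.mem_setOf_eq] at hy
      exact (hzero hy).symm ▸ Set.mem_singleton _
    | succ m =>
      apply (hfin m x).subset
      intro y hy
      exact (hkiff m x y).mp hy
  -- growth stages are unbounded
  have hgrow_unbdd : ∀ n, ∃ k, n ≤ k ∧ grow k := by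
    intro n
    by_contra h
    push_neg at h
    have hdown : ∀ m (y : S), P (n + m) x₀ y → P n x₀ y := by
      intro m
      induction m with
      | zero => intro y hy; exact hy
      | succ m ih =>
        intro y hy
        apply ih
        by_contra hny
        exact h (n + m) (by omega) ⟨y, hy, fun hc => hny (hPle (by omega) x₀ y hc)⟩
    have huniv : {y : S | P n x₀ y} = Set.univ := by
      ext y
      simp only [Set.mem_setOf_eq, Set.mem_univ, iff_true]
      obtain ⟨j, hj⟩ := hexh x₀ y
      exact hdown j y (hPle (by omega) x₀ y hj)
    have := hfin n x₀
    rw [huniv] at this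
    exact Set.infinite_univ this
  have heven_stage : ∀ n, ∃ k, n ≤ k ∧ grow k ∧ Even (t k) := by
    intro n
    obtain ⟨k, hk1, hk2, hk3⟩ := tcount_hits_ge grow hgrow_unbdd n
      (2 * (tcount grow n + 1)) (by omega)
    refine ⟨k, hk1, hk2, ?_⟩
    show Even (tcount grow k)
    rw [hk3]
    exact even_two_mul _
  have hodd_stage : ∀ n, ∃ k, n ≤ k ∧ grow k ∧ ¬ Even (t k) := by
    intro n
    obtain ⟨k, hk1, hk2, hk3⟩ := tcount_hits_ge grow hgrow_unbdd n
      (2 * tcount grow n + 1) (by omega)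
    refine ⟨k, hk1, hk2, ?_⟩
    show ¬ Even (tcount grow k)
    rw [hk3, Nat.even_iff]
    omega
  have hbelow : ∀ x : S, ∃ y, klt key y x := by
    intro x
    obtain ⟨n₁, hn₁⟩ := hexh x₀ x
    obtain ⟨k, hk1, hk2, hk3⟩ := heven_stage n₁
    obtain ⟨y, hy1, hy2⟩ := hk2
    have hkx : P k x₀ x := hPle hk1 x₀ x hn₁
    have hxy : P (k+1) x y := htrans (k+1) x x₀ y (hsymm (k+1) x₀ x (hcoarser k x₀ x hkx)) hy1
    refine ⟨y, k + 1, ?_, ?_⟩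
    · have hkeyx : key (k+1) x = 0 := by rw [hkeyS, if_pos hkx]
      have hkeyy : key (k+1) y = -(r k y : ℤ) - 1 := by
        rw [hkeyS, if_neg hy2, if_pos hk3]
      rw [hkeyx, hkeyy]
      omega
    · intro j hj
      obtain ⟨i, rfl⟩ : ∃ i, j = i + 1 := ⟨j - 1, by omega⟩
      exact (hkiff i y x).mpr (hsymm i x y (hPle (by omega) x y hxy))
  have habove : ∀ x : S, ∃ y, klt key x y := by
    intro x
    obtain ⟨n₁, hn₁⟩ := hexh x₀ x
    obtain ⟨k, hk1, hk2, hk3⟩ := hodd_stage n₁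
    obtain ⟨y, hy1, hy2⟩ := hk2
    have hkx : P k x₀ x := hPle hk1 x₀ x hn₁
    have hxy : P (k+1) x y := htrans (k+1) x x₀ y (hsymm (k+1) x₀ x (hcoarser k x₀ x hkx)) hy1
    refine ⟨y, k + 1, ?_, ?_⟩
    · have hkeyx : key (k+1) x = 0 := by rw [hkeyS, if_pos hkx]
      have hkeyy : key (k+1) y = (r k y : ℤ) + 1 := by
        rw [hkeyS, if_neg hy2, if_neg hk3]
      rw [hkeyx, hkeyy]
      omega
    · intro j hj
      obtain ⟨i, rfl⟩ : ∃ i, j = i + 1 := ⟨j - 1, by omega⟩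
      exact (hkiff i x y).mpr (hPle (by omega) x y hxy)
  obtain ⟨f, hf⟩ := exists_equiv_int hmono hagree hzero hfink hbelow habove
  refine ⟨f, fun n x y z hxy hxz hzy => ?_⟩
  have h1 : x = z ∨ klt key x z := by
    rcases eq_or_lt_of_le hxz with h | h
    · exact Or.inl (f.injective h)
    · exact Or.inr ((hf x z).mpr h)
  have h2 : z = y ∨ klt key z y := by
    rcases eq_or_lt_of_le hzy with h | h
    · exact Or.inl (f.injective h)
    · exact Or.inr ((hf z y).mpr h)
  exact (hkiff n x z).mp
    (key_interval hmono ((hkiff n x y).mpr hxy) h1 h2)
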